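/- Let p ≥ 3 be an integer, u = exp(2πi/(3p)), τ = −1 + i√2, α = 2 − u³ − conj(u)³, β = (conj(u)² − u)τ, and let H be the 3×3 Hermitian matrix [[α, β, conj(β)], [conj(β), α, β], [β, conj(β), α]]. Then H has signature (2,1): exactly two of its (real) eigenvalues are positive and exactly one is negative. -/

import Mathlib

open Matrix Finset

noncomputable section

/-- The Hermitian matrix H for u = exp(2πi/(3p)) and τ = −1 + i√2. -/
def Hp (p : ℕ) : Matrix (Fin 3) (Fin 3) ℂ :=
  let u : ℂ := Complex.exp (2 * Real.pi * Complex.I / (3 * p))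
  let τ : ℂ := -1 + Complex.I * Real.sqrt 2
  let α : ℂ := 2 - u ^ 3 - (starRingEnd ℂ u) ^ 3
  let β : ℂ := ((starRingEnd ℂ u) ^ 2 - u) * τ
  !![α, β, starRingEnd ℂ β; starRingEnd ℂ β, α, β; β, starRingEnd ℂ β, α]

/-- Sign counting for three reals with negative product and positive sum. -/
lemma count_aux (e : Fin 3 → ℝ) (hprod : e 0 * e 1 * e 2 < 0) (hsum : 0 < e 0 + e 1 + e 2) :
    (univ.filter fun j : Fin 3 => 0 < e j).card = 2 ∧
    (univ.filter fun j : Fin 3 => e j < 0).card = 1 := by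
  rcases lt_trichotomy (e 0) 0 with h0 | h0 | h0 <;>
  rcases lt_trichotomy (e 1) 0 with h1 | h1 | h1 <;>
  rcases lt_trichotomy (e 2) 0 with h2 | h2 | h2 <;>
  first
  | (rw [h0] at hprod; simp at hprod)
  | (rw [h1] at hprod; simp at hprod)
  | (rw [h2] at hprod; simp at hprod)
  | (exfalso; nlinarith [mul_pos (mul_pos h0 h1) h2])
  | (exfalso; nlinarith [mul_pos (mul_pos_of_neg_of_neg h0 h1) h2])
  | (exfalso; nlinarith [mul_pos (mul_pos_of_neg_of_neg h0 h2) h1])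
  | (exfalso; nlinarith [mul_pos h0 (mul_pos_of_neg_of_neg h1 h2)])
  | (exfalso; linarith)
  | (constructor <;>
      (rw [Finset.card_filter, Fin.sum_univ_three]; simp [h0, h1, h2, asymm h0, asymm h1, asymm h2]))

/-- The trace of a Hermitian matrix is the sum of its eigenvalues. -/
lemma trace_aux {n : Type*} [Fintype n] [DecidableEq n] {A : Matrix n n ℂ} (hA : A.IsHermitian) :
    A.trace = ∑ i, (hA.eigenvalues i : ℂ) := by
  conv_lhs => rw [hA.spectral_theorem, Unitary.conjStarAlgAut_apply]
  rw [Matrix.trace_mul_cycle]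
  rw [show (star (hA.eigenvectorUnitary : Matrix n n ℂ)) * (hA.eigenvectorUnitary : Matrix n n ℂ) = 1 from
    Matrix.mem_unitaryGroup_iff'.mp (hA.eigenvectorUnitary).2]
  rw [one_mul, Matrix.trace_diagonal]
  rfl

/-- Trace of the circulant-type matrix. -/
lemma trace_circ (a b : ℂ) :
    (!![a, b, starRingEnd ℂ b; starRingEnd ℂ b, a, b; b, starRingEnd ℂ b, a]).trace = 3 * a := by
  rw [Matrix.trace_fin_three,
    show (!![a, b, starRingEnd ℂ b; starRingEnd ℂ b, a, b; b, starRingEnd ℂ b, a]) 0 0 = a from rfl,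
    show (!![a, b, starRingEnd ℂ b; starRingEnd ℂ b, a, b; b, starRingEnd ℂ b, a]) 1 1 = a from rfl,
    show (!![a, b, starRingEnd ℂ b; starRingEnd ℂ b, a, b; b, starRingEnd ℂ b, a]) 2 2 = a from rfl]
  ring

/-- The determinant of the circulant-type matrix built from u on the unit circle. -/
lemma det_aux (u : ℂ) (c s q : ℝ) (huu : u * starRingEnd ℂ u = 1)
    (hu3 : u ^ 3 = (c : ℂ) + (s : ℂ) * Complex.I)
    (hq2 : ((q : ℝ) : ℂ) ^ 2 = 2) (hcsr : c ^ 2 + s ^ 2 = (1:ℝ)) :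
    (!![2 - u ^ 3 - (starRingEnd ℂ u) ^ 3,
        ((starRingEnd ℂ u) ^ 2 - u) * (-1 + Complex.I * ((q : ℝ) : ℂ)),
        starRingEnd ℂ (((starRingEnd ℂ u) ^ 2 - u) * (-1 + Complex.I * ((q : ℝ) : ℂ)));
        starRingEnd ℂ (((starRingEnd ℂ u) ^ 2 - u) * (-1 + Complex.I * ((q : ℝ) : ℂ))),
        2 - u ^ 3 - (starRingEnd ℂ u) ^ 3,
        ((starRingEnd ℂ u) ^ 2 - u) * (-1 + Complex.I * ((q : ℝ) : ℂ));
        ((starRingEnd ℂ u) ^ 2 - u) * (-1 + Complex.I * ((q : ℝ) : ℂ)),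
        starRingEnd ℂ (((starRingEnd ℂ u) ^ 2 - u) * (-1 + Complex.I * ((q : ℝ) : ℂ))),
        2 - u ^ 3 - (starRingEnd ℂ u) ^ 3]).det
      = (((2 - 2*c)^3 + 10*(c^2 - s^2 - 4*c + 3) - 2*q*s*(2 - 2*c) - 9*(2 - 2*c)^2 : ℝ) : ℂ) := by
  have hcirc : ∀ a b c' : ℂ, (!![a,b,c';c',a,b;b,c',a]).det = a^3+b^3+c'^3-3*(a*(b*c')) := by
    intros; simp [Matrix.det_fin_three]; ring
  rw [hcirc]
  have hcs : ((c:ℂ))^2 + ((s:ℂ))^2 = 1 := by exact_mod_cast congrArg (Complex.ofReal) hcsr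
  have hv3 : (starRingEnd ℂ u) ^ 3 = (c : ℂ) - (s : ℂ) * Complex.I := by
    rw [← map_pow, hu3]
    simp [_root_.map_add, _root_.map_mul, Complex.conj_I, Complex.conj_ofReal]
    ring
  simp only [_root_.map_mul, _root_.map_sub, _root_.map_add, _root_.map_neg, _root_.map_pow,
    _root_.map_one, Complex.conj_conj, Complex.conj_I, Complex.conj_ofReal]
  push_cast
  set v := starRingEnd ℂ u with hv
  linear_combination
      ((-24) + (12)*(c:ℂ) + (-6)*(q:ℂ)^2*Complex.I^2 + (6)*v^3 + (-9)*v^3*(q:ℂ)*Complex.I + (6)*v^3*(q:ℂ)^2*Complex.I^2 + (-3)*v^3*(q:ℂ)^3*Complex.I^3 + (-18)*u*v + (-12)*u*v*(q:ℂ)^2*Complex.I^2 + (-3)*u*v^4*(q:ℂ)^2*Complex.I^2 + (6)*u^2*v^2 + (6)*u^2*v^2*(q:ℂ)^2*Complex.I^2 + (-3)*u^2*v^5 + (6)*u^3 + (9)*u^3*(q:ℂ)*Complex.I + (6)*u^3*(q:ℂ)^2*Complex.I^2 + (3)*u^3*(q:ℂ)^3*Complex.I^3 + (-3)*u^4*v*(q:ℂ)^2*Complex.I^2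 + (-3)*u^5*v^2) * huu +
      ((2) + (2)*(s:ℂ)*Complex.I + (2)*(c:ℂ) + (-2)*(c:ℂ)*(s:ℂ)*Complex.I + (-2)*(c:ℂ)^2 + (6)*(q:ℂ)*Complex.I + (3)*(q:ℂ)*(s:ℂ) + (2)*(q:ℂ)*(s:ℂ)*Complex.I^2 + (-1)*(q:ℂ)*(c:ℂ)*Complex.I + (3)*(q:ℂ)^2*Complex.I^2 + (2)*(q:ℂ)^3*Complex.I^3 + (-3)*u*v*(q:ℂ)^2*Complex.I^2 + (2)*u^3 + (-1)*u^3*(s:ℂ)*Complex.I + (-1)*u^3*(c:ℂ) + (-3)*u^3*(q:ℂ)*Complex.I + (-1)*u^3*(q:ℂ)^3*Complex.I^3 + (-1)*u^6) * hu3 +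
      ((2) + (-2)*(s:ℂ)*Complex.I + (2)*(c:ℂ) + (2)*(c:ℂ)*(s:ℂ)*Complex.I + (-2)*(c:ℂ)^2 + (-6)*(q:ℂ)*Complex.I + (3)*(q:ℂ)*(s:ℂ) + (2)*(q:ℂ)*(s:ℂ)*Complex.I^2 + (1)*(q:ℂ)*(c:ℂ)*Complex.I + (3)*(q:ℂ)^2*Complex.I^2 + (-2)*(q:ℂ)^3*Complex.I^3 + (2)*v^3 + (1)*v^3*(s:ℂ)*Complex.I + (-1)*v^3*(c:ℂ) + (3)*v^3*(q:ℂ)*Complex.I + (1)*v^3*(q:ℂ)^3*Complex.I^3 + (-1)*v^6 + (-3)*u*v*(q:ℂ)^2*Complex.I^2) * hv3 +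
      ((-6)*Complex.I^2 + (6)*(c:ℂ)*Complex.I^2 + (4)*(q:ℂ)*(s:ℂ)*Complex.I^4 + (-1)*v^3*(q:ℂ)*(s:ℂ)*Complex.I^4 + (1)*v^3*(q:ℂ)*(c:ℂ)*Complex.I^3 + (-6)*u*v*(c:ℂ)*Complex.I^2 + (6)*u^2*v^2*Complex.I^2 + (-1)*u^3*(q:ℂ)*(s:ℂ)*Complex.I^4 + (-1)*u^3*(q:ℂ)*(c:ℂ)*Complex.I^3) * hq2 +
      ((-12) + (4)*(s:ℂ)^2 + (12)*(c:ℂ) + (-4)*(c:ℂ)*(s:ℂ)^2 + (4)*(q:ℂ)*(s:ℂ) + (8)*(q:ℂ)*(s:ℂ)*Complex.I^2 + (2)*(q:ℂ)*(c:ℂ)*(s:ℂ) + (-1)*v^3*(s:ℂ)^2 + (-3)*v^3*(q:ℂ)*(s:ℂ) + (-2)*v^3*(q:ℂ)*(s:ℂ)*Complex.I^2 + (2)*v^3*(q:ℂ)*(c:ℂ)*Complex.I + (-12)*u*v*(c:ℂ) + (12)*u^2*v^2 + (-1)*u^3*(s:ℂ)^2 + (-3)*u^3*(q:ℂ)*(s:ℂ)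 + (-2)*u^3*(q:ℂ)*(s:ℂ)*Complex.I^2 + (-2)*u^3*(q:ℂ)*(c:ℂ)*Complex.I) * Complex.I_sq +
      ((6) + (4)*(c:ℂ) + (1)*v^3 + (1)*u^3) * hcs

/-- for integers p ≥ 3, the Hermitian matrix H has signature (2,1):
exactly two positive (real) eigenvalues and exactly one negative eigenvalue. -/
theorem stmt_6 (p : ℕ) (hp : 3 ≤ p) (hH : (Hp p).IsHermitian) :
    (univ.filter fun j : Fin 3 => 0 < hH.eigenvalues j).card = 2 ∧
    (univ.filter fun j : Fin 3 => hH.eigenvalues j < 0).card = 1 := by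
  have hp0 : (p : ℝ) ≠ 0 := Nat.cast_ne_zero.mpr (by omega)
  have hppos : (0:ℝ) < p := Nat.cast_pos.mpr (by omega)
  have hp3 : (3:ℝ) ≤ p := by exact_mod_cast hp
  have hπ := Real.pi_pos
  set θ : ℝ := 2 * Real.pi / (3 * p) with hθ
  set c : ℝ := Real.cos (3 * θ) with hc
  set s : ℝ := Real.sin (3 * θ) with hs
  set q : ℝ := Real.sqrt 2 with hq
  have hexp : (2 * (Real.pi : ℂ) * Complex.I / (3 * (p : ℂ)) : ℂ) = (θ : ℂ) * Complex.I := by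
    rw [hθ]; push_cast
    have h3p : (3 * (p : ℂ)) ≠ 0 := by simp [Nat.cast_ne_zero]; omega
    field_simp
  set u : ℂ := Complex.exp ((θ : ℂ) * Complex.I) with hu
  have huu : u * starRingEnd ℂ u = 1 := by
    rw [hu, ← Complex.exp_conj, ← Complex.exp_add]
    simp [Complex.conj_ofReal]
  have hu3 : u ^ 3 = ((c : ℝ) : ℂ) + ((s : ℝ) : ℂ) * Complex.I := by
    rw [hu, ← Complex.exp_nat_mul]
    rw [show ((3:ℕ) : ℂ) * ((θ:ℝ) * Complex.I) = ((3*θ : ℝ) : ℂ) * Complex.I by push_cast; ring]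
    rw [Complex.exp_mul_I, ← Complex.ofReal_cos, ← Complex.ofReal_sin, hc, hs]
  have hv3 : (starRingEnd ℂ u) ^ 3 = ((c : ℝ) : ℂ) - ((s : ℝ) : ℂ) * Complex.I := by
    rw [← map_pow, hu3]
    simp [_root_.map_add, _root_.map_mul, Complex.conj_I, Complex.conj_ofReal]
    ring
  have hq2 : ((q : ℝ) : ℂ) ^ 2 = 2 := by
    have h2 : q ^ 2 = 2 := Real.sq_sqrt (by norm_num)
    exact_mod_cast congrArg Complex.ofReal h2
  have hcsr : c ^ 2 + s ^ 2 = (1:ℝ) := by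
    rw [hc, hs]; exact Real.cos_sq_add_sin_sq (3*θ)
  have hHp : Hp p =
      !![2 - u ^ 3 - (starRingEnd ℂ u) ^ 3,
        ((starRingEnd ℂ u) ^ 2 - u) * (-1 + Complex.I * ((q : ℝ) : ℂ)),
        starRingEnd ℂ (((starRingEnd ℂ u) ^ 2 - u) * (-1 + Complex.I * ((q : ℝ) : ℂ)));
        starRingEnd ℂ (((starRingEnd ℂ u) ^ 2 - u) * (-1 + Complex.I * ((q : ℝ) : ℂ))),
        2 - u ^ 3 - (starRingEnd ℂ u) ^ 3,
        ((starRingEnd ℂ u) ^ 2 - u) * (-1 + Complex.I * ((q : ℝ) : ℂ));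
        ((starRingEnd ℂ u) ^ 2 - u) * (-1 + Complex.I * ((q : ℝ) : ℂ)),
        starRingEnd ℂ (((starRingEnd ℂ u) ^ 2 - u) * (-1 + Complex.I * ((q : ℝ) : ℂ))),
        2 - u ^ 3 - (starRingEnd ℂ u) ^ 3] := by
    simp only [Hp]
    rw [hexp]
  -- determinant
  have hdet : (Hp p).det
      = (((2 - 2*c)^3 + 10*(c^2 - s^2 - 4*c + 3) - 2*q*s*(2 - 2*c) - 9*(2 - 2*c)^2 : ℝ) : ℂ) := by
    rw [hHp]; exact det_aux u c s q huu hu3 hq2 hcsr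
  -- trace
  have htr : (Hp p).trace = ((6 - 6*c : ℝ) : ℂ) := by
    rw [hHp, trace_circ, hu3, hv3]
    push_cast
    ring
  -- eigenvalue product and sum
  have hPe : hH.eigenvalues 0 * hH.eigenvalues 1 * hH.eigenvalues 2
      = (2 - 2*c)^3 + 10*(c^2 - s^2 - 4*c + 3) - 2*q*s*(2 - 2*c) - 9*(2 - 2*c)^2 := by
    have h := hH.det_eq_prod_eigenvalues
    rw [hdet, Fin.prod_univ_three] at h
    have h2 : (((2 - 2*c)^3 + 10*(c^2 - s^2 - 4*c + 3) - 2*q*s*(2 - 2*c) - 9*(2 - 2*c)^2 : ℝ) : ℂ)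
        = ((hH.eigenvalues 0 * hH.eigenvalues 1 * hH.eigenvalues 2 : ℝ) : ℂ) := by
      rw [h]; push_cast; norm_num [RCLike.ofReal_mul]
    exact (Complex.ofReal_inj.mp h2).symm
  have hSe : hH.eigenvalues 0 + hH.eigenvalues 1 + hH.eigenvalues 2 = 6 - 6*c := by
    have h := trace_aux hH
    rw [htr, Fin.sum_univ_three] at h
    have h2 : ((6 - 6*c : ℝ) : ℂ)
        = ((hH.eigenvalues 0 + hH.eigenvalues 1 + hH.eigenvalues 2 : ℝ) : ℂ) := by
      rw [h]; push_cast; norm_num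
    exact (Complex.ofReal_inj.mp h2).symm
  -- inequalities
  have h3θ : 3*θ = 2*Real.pi/p := by rw [hθ]; field_simp
  have hlt1 : 0 < 2*Real.pi/p := by positivity
  have hlt2 : 2*Real.pi/p < Real.pi := by
    rw [div_lt_iff₀ hppos]; nlinarith
  have hs0 : 0 < s := by
    rw [hs, h3θ]; exact Real.sin_pos_of_pos_of_lt_pi hlt1 hlt2
  have hc2 : -1 ≤ c := Real.neg_one_le_cos _
  have hc1 : c < 1 := by
    refine lt_of_le_of_ne (Real.cos_le_one _) ?_
    rw [hc, h3θ]
    intro hcontra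
    have hb1 : -(2*Real.pi) < 2*Real.pi/p := by linarith
    have hb2 : 2*Real.pi/p < 2*Real.pi := by linarith
    have := (Real.cos_eq_one_iff_of_lt_of_lt hb1 hb2).mp hcontra
    linarith
  have hq0 : 0 < q := Real.sqrt_pos.mpr (by norm_num)
  have hRneg : (2 - 2*c)^3 + 10*(c^2 - s^2 - 4*c + 3) - 2*q*s*(2 - 2*c) - 9*(2 - 2*c)^2 < 0 := by
    have hfac : (2 - 2*c)^3 + 10*(c^2 - s^2 - 4*c + 3) - 2*q*s*(2 - 2*c) - 9*(2 - 2*c)^2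
        = 4*(1-c)*(2*(1-c)*(-1-c) - q*s) := by linear_combination (-10)*hcsr
    rw [hfac]
    have hneg : 2*(1-c)*(-1-c) - q*s < 0 := by
      nlinarith [mul_pos hq0 hs0,
        mul_nonneg (by linarith : (0:ℝ) ≤ 1-c) (by linarith : (0:ℝ) ≤ 1+c)]
    exact mul_neg_of_pos_of_neg (by linarith) hneg
  exact count_aux hH.eigenvalues (by rw [hPe]; exact hRneg) (by rw [hSe]; linarith)

end
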